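/- arXiv:1106.6204 — 2 statements merged into one kernel-verified Lean document; each statement's English description precedes it below -/
import Mathlib

section
/- The function f(ζ) = (1/2)[ζ - log(2 - e^{-ζ})] for ζ > 0, extended by f(ζ) = 0 for ζ ≤ 0, is continuous at 0 and continuously differentiable on all of ℝ with f'(0) = 0, but its second derivative is discontinuous at ζ = 0; i.e., the pinning phase transition for simple random walk is second order. -/
open Real Set Filter

private lemma two_sub_exp_pos {x : ℝ} (hx : 0 ≤ x) : 0 < 2 - Real.exp (-x) := by
  have h1 : Real.exp (-x) ≤ 1 := by
    calc Real.exp (-x) ≤ Real.exp 0 := Real.exp_le_exp.mpr (by linarith)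
    _ = 1 := Real.exp_zero
  linarith

/-- derivative of the analytic branch -/
private lemma g_deriv {x : ℝ} (hne : 2 - Real.exp (-x) ≠ 0) :
    HasDerivAt (fun y : ℝ => (1 / 2) * (y - Real.log (2 - Real.exp (-y))))
      ((1 / 2) * (1 - Real.exp (-x) / (2 - Real.exp (-x)))) x := by
  have hexp : HasDerivAt (fun y : ℝ => Real.exp (-y)) (-Real.exp (-x)) x := by
    simpa using ((hasDerivAt_id x).neg).exp
  have h2 : HasDerivAt (fun y : ℝ => 2 - Real.exp (-y)) (Real.exp (-x)) x := by
    refine ((hasDerivAt_const x (2 : ℝ)).sub hexp).congr_deriv ?_; ring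
  have hlog := h2.log hne
  simpa using ((hasDerivAt_id x).sub hlog).const_mul (1 / 2 : ℝ)

/-- derivative of the (normalized) derivative branch -/
private lemma psi_deriv {x : ℝ} (hne : 2 - Real.exp (-x) ≠ 0) :
    HasDerivAt (fun y : ℝ => (1 - Real.exp (-y)) / (2 - Real.exp (-y)))
      (Real.exp (-x) / (2 - Real.exp (-x)) ^ 2) x := by
  have hexp : HasDerivAt (fun y : ℝ => Real.exp (-y)) (-Real.exp (-x)) x := by
    simpa using ((hasDerivAt_id x).neg).exp
  have hn : HasDerivAt (fun y : ℝ => 1 - Real.exp (-y)) (Real.exp (-x)) x := by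
    refine ((hasDerivAt_const x (1 : ℝ)).sub hexp).congr_deriv ?_; ring
  have hd : HasDerivAt (fun y : ℝ => 2 - Real.exp (-y)) (Real.exp (-x)) x := by
    refine ((hasDerivAt_const x (2 : ℝ)).sub hexp).congr_deriv ?_; ring
  have := hn.div hd hne
  refine this.congr_deriv ?_
  congr 1
  ring

/-- The free energy `f(ζ) = ½[ζ - log(2 - e^{-ζ})]` for `ζ > 0`, extended by
`0` for `ζ ≤ 0`, is continuous, continuously differentiable on `ℝ` with
`f'(0) = 0`, but is not twice continuously differentiable at `0`: the phase
transition is second order. -/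
theorem srw_pinning_second_order
    (f : ℝ → ℝ)
    (hf : ∀ ζ : ℝ, f ζ = if ζ ≤ 0 then 0 else (1 / 2) * (ζ - log (2 - exp (-ζ)))) :
    Continuous f ∧
    (∃ f' : ℝ → ℝ, Continuous f' ∧ (∀ x, HasDerivAt f (f' x) x) ∧ f' 0 = 0) ∧
    ¬ ContDiffAt ℝ 2 f 0 := by
  set g : ℝ → ℝ := fun y => (1 / 2) * (y - Real.log (2 - Real.exp (-y))) with hg
  set F' : ℝ → ℝ := fun x => (1 - Real.exp (-(max x 0))) / (2 - Real.exp (-(max x 0))) with hF'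
  have hF'0 : F' 0 = 0 := by simp [hF']
  -- F' agrees with the formulas on each side
  have hF'neg : ∀ x ≤ (0:ℝ), F' x = 0 := by
    intro x hx
    have : max x 0 = 0 := max_eq_right hx
    simp [hF', this]
  have hF'pos : ∀ x : ℝ, 0 ≤ x → F' x = (1 - Real.exp (-x)) / (2 - Real.exp (-x)) := by
    intro x hx
    simp [hF', max_eq_left hx]
  have hfg : ∀ x : ℝ, 0 ≤ x → f x = g x := by
    intro x hx
    rw [hf]
    split_ifs with h
    · have hx0 : x = 0 := le_antisymm h hx
      subst hx0
      norm_num [hg]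
    · rw [hg]
  have hf0 : f 0 = 0 := by rw [hf]; simp
  -- g has derivative F' x for x ≥ 0
  have hgF' : ∀ x : ℝ, 0 ≤ x → HasDerivAt g (F' x) x := by
    intro x hx
    have hpos := two_sub_exp_pos hx
    have hne := ne_of_gt hpos
    have := g_deriv hne
    rw [hF'pos x hx]
    convert this using 1
    field_simp
    ring
  -- f has derivative F' x everywhere
  have hder : ∀ x : ℝ, HasDerivAt f (F' x) x := by
    intro x
    rcases lt_trichotomy x 0 with h | h | h
    · rw [hF'neg x h.le]
      have hev : f =ᶠ[nhds x] (fun _ => (0:ℝ)) := by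
        filter_upwards [Iio_mem_nhds h] with y hy
        rw [hf, if_pos (le_of_lt hy)]
      exact (hasDerivAt_const x (0:ℝ)).congr_of_eventuallyEq hev
    · subst h
      rw [hF'0]
      have hleft : HasDerivWithinAt f 0 (Iic 0) 0 := by
        refine (hasDerivAt_const (0:ℝ) (0:ℝ)).hasDerivWithinAt.congr ?_ hf0
        intro y hy
        rw [hf, if_pos (mem_Iic.mp hy)]
      have hright : HasDerivWithinAt f 0 (Ici 0) 0 := by
        have h0 := hgF' 0 le_rfl
        rw [hF'0] at h0
        refine h0.hasDerivWithinAt.congr ?_ (by rw [hfg 0 le_rfl])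
        intro y hy
        exact hfg y hy
      have := hleft.union hright
      rwa [Iic_union_Ici, hasDerivWithinAt_univ] at this
    · have hev : f =ᶠ[nhds x] g := by
        filter_upwards [Ioi_mem_nhds h] with y hy
        exact hfg y (le_of_lt hy)
      exact (hgF' x h.le).congr_of_eventuallyEq hev
  -- continuity of F'
  have hF'cont : Continuous F' := by
    have hco : ContinuousOn (fun t : ℝ => (1 - Real.exp (-t)) / (2 - Real.exp (-t))) (Ici 0) := by
      apply ContinuousOn.div
      · fun_prop
      · fun_prop
      · intro t ht
        exact ne_of_gt (two_sub_exp_pos ht)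
    have hmax : Continuous (fun x : ℝ => max x 0) := continuous_id.max continuous_const
    exact hco.comp_continuous hmax (fun x => le_max_right x 0)
  refine ⟨?_, ⟨F', hF'cont, hder, hF'0⟩, ?_⟩
  · exact continuous_iff_continuousAt.mpr fun x => (hder x).continuousAt
  · -- not C² at 0
    intro hC2
    have h2 : ContDiffAt ℝ ((1 : ℕ) + 1) f 0 := by
      convert hC2 using 2
      norm_num
    rw [contDiffAt_succ_iff_hasFDerivAt] at h2
    obtain ⟨F, ⟨u, hu, hFu⟩, hF⟩ := h2
    -- F x 1 = F' x on u
    have hev : (fun x => F x 1) =ᶠ[nhds 0] F' := by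
      filter_upwards [hu] with x hx
      have h1 : HasFDerivAt f (F x) x := hFu x hx
      have h2 : HasFDerivAt f (ContinuousLinearMap.smulRight (1 : ℝ →L[ℝ] ℝ) (F' x)) x :=
        (hder x).hasFDerivAt
      have := h1.unique h2
      rw [this]
      simp
    have hF'C1 : ContDiffAt ℝ 1 F' 0 :=
      (hF.clm_apply contDiffAt_const).congr_of_eventuallyEq hev.symm
    have hdiff : DifferentiableAt ℝ F' 0 := hF'C1.differentiableAt one_ne_zero
    have hd := hdiff.hasDerivAt
    set c := deriv F' 0 with hc
    -- left: c = 0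
    have hIic : UniqueDiffWithinAt ℝ (Iic (0:ℝ)) 0 := uniqueDiffOn_Iic 0 0 (by simp)
    have hleft : HasDerivWithinAt F' 0 (Iic 0) 0 := by
      refine (hasDerivAt_const (0:ℝ) (0:ℝ)).hasDerivWithinAt.congr ?_ hF'0
      intro y hy
      exact hF'neg y hy
    have hc0 : c = 0 := by
      have e1 := (hd.hasDerivWithinAt (s := Iic 0)).derivWithin hIic
      have e2 := hleft.derivWithin hIic
      rw [← e1, e2]
    -- right: c = 1
    have hIci : UniqueDiffWithinAt ℝ (Ici (0:ℝ)) 0 := uniqueDiffOn_Ici 0 0 (by simp)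
    have hpsi : HasDerivAt (fun y : ℝ => (1 - Real.exp (-y)) / (2 - Real.exp (-y))) 1 0 := by
      have := psi_deriv (x := 0) (by norm_num)
      norm_num at this
      exact this
    have hright : HasDerivWithinAt F' 1 (Ici 0) 0 := by
      refine hpsi.hasDerivWithinAt.congr ?_ (by simpa using hF'pos 0 le_rfl)
      intro y hy
      exact hF'pos y hy
    have hc1 : c = 1 := by
      have e1 := (hd.hasDerivWithinAt (s := Ici 0)).derivWithin hIci
      have e2 := hright.derivWithin hIci
      rw [← e1, e2]
    rw [hc0] at hc1
    norm_num at hc1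
end

section
/- Let R : ℕ → [0,∞) satisfy R(n) = c n^{-(1+a)}(1+o(1)) as n → ∞ with c > 0 and a ∈ (0,1), and let ψ(x) = ∑_{n≥0} R̄(n) x^n where R̄(n) = ∑_{k>n} R(k). Then as r ↓ 0, ψ(e^{-r}) = (c Γ(1-a)/a) r^{a-1} (1 + o(1)), where Γ(1-a) = ∫₀^∞ t^{-a} e^{-t} dt. -/
open Real Filter Topology
open Set MeasureTheory


lemma union_Ioc_eq_Ioi {s r : ℝ} (hr : 0 < r) :
    (⋃ n : ℕ, Ioc (s + r * n) (s + r * (n + 1))) = Ioi s := by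
  ext x
  simp only [mem_iUnion, mem_Ioc, mem_Ioi]
  constructor
  · rintro ⟨n, h1, h2⟩
    have : (0:ℝ) ≤ r * n := by positivity
    linarith
  · intro hx
    set m := ⌈(x - s) / r⌉₊ with hm
    have hm1 : 1 ≤ m := Nat.one_le_iff_ne_zero.2 (by
      simp only [hm, ne_eq, Nat.ceil_eq_zero, not_le]
      exact div_pos (by linarith) hr)
    refine ⟨m - 1, ?_, ?_⟩
    · have h := Nat.lt_ceil.1 (Nat.sub_lt hm1 one_pos)
      have : ((m - 1 : ℕ) : ℝ) * r < x - s := by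
        rw [← lt_div_iff₀ hr] at *
        linarith [h]
      linarith [this, mul_comm r ((m-1:ℕ):ℝ)]
    · have h := Nat.le_ceil ((x - s) / r)
      rw [div_le_iff₀ hr] at h
      have hcast : ((m - 1 : ℕ) : ℝ) + 1 = (m : ℝ) := by
        have := Nat.succ_pred_eq_of_pos hm1
        push_cast [Nat.cast_sub hm1]; ring
      rw [hcast]
      linarith [mul_comm (m:ℝ) r]

lemma riemann_bounds {f : ℝ → ℝ} {s r : ℝ} (hr : 0 < r)
    (hf : AntitoneOn f (Ioi s)) (hpos : ∀ x ∈ Ioi s, 0 ≤ f x)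
    (hint : IntegrableOn f (Ioi s)) :
    Summable (fun n : ℕ => f (s + r * (n + 1))) ∧
    (∑' n : ℕ, r * f (s + r * (n + 1))) ≤ (∫ x in Ioi s, f x) ∧
    (∫ x in Ioi (s + r), f x) ≤ ∑' n : ℕ, r * f (s + r * (n + 1)) := by
  have hmem : ∀ (n : ℕ) (x : ℝ), x ∈ Ioc (s + r * n) (s + r * (n+1)) → x ∈ Ioi s := by
    intro n x hx
    have : (0:ℝ) ≤ r * n := by positivity
    have := hx.1; simp only [mem_Ioi]; linarith
  have hmemR : ∀ n : ℕ, s + r * ((n:ℝ) + 1) ∈ Ioi s := by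
    intro n; simp only [mem_Ioi]; nlinarith [Nat.cast_nonneg (α := ℝ) n]
  have hdisj : Pairwise (Function.onFun Disjoint fun n : ℕ => Ioc (s + r * n) (s + r * (n + 1))) := by
    refine (pairwise_disjoint_on _).2 fun m n hmn => ?_
    refine Set.Ioc_disjoint_Ioc.2 ?_
    refine le_trans (min_le_left _ _) (le_trans ?_ (le_max_right _ _))
    have : (m:ℝ) + 1 ≤ (n:ℝ) := by exact_mod_cast hmn
    nlinarith
  have hmeas : ∀ n : ℕ, MeasurableSet (Ioc (s + r * (n:ℝ)) (s + r * ((n:ℝ) + 1))) :=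
    fun n => measurableSet_Ioc
  have hintU : IntegrableOn f (⋃ n : ℕ, Ioc (s + r * (n:ℝ)) (s + r * ((n:ℝ) + 1))) := by
    rw [union_Ioc_eq_Ioi hr]; exact hint
  have hHS : HasSum (fun n : ℕ => ∫ x in Ioc (s + r * (n:ℝ)) (s + r * ((n:ℝ)+1)), f x)
      (∫ x in Ioi s, f x) := by
    have := hasSum_integral_iUnion hmeas hdisj hintU
    rwa [union_Ioc_eq_Ioi hr] at this
  have hvol : ∀ n : ℕ, (volume (Ioc (s + r * (n:ℝ)) (s + r * ((n:ℝ)+1)))).toReal = r := by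
    intro n; rw [Real.volume_Ioc, ENNReal.toReal_ofReal (by nlinarith [hr.le] : (0:ℝ) ≤ s + r*((n:ℝ)+1) - (s + r*n))]
    ring_nf
  -- per-term lower bound of each integral
  have hterm_ge : ∀ n : ℕ, r * f (s + r * ((n:ℝ) + 1)) ≤
      ∫ x in Ioc (s + r * (n:ℝ)) (s + r * ((n:ℝ)+1)), f x := by
    intro n
    have h := setIntegral_ge_of_const_le (μ := volume) (c := f (s + r * ((n:ℝ)+1)))
      (hs := hmeas n) (hμs := by rw [Real.volume_Ioc]; exact ENNReal.ofReal_ne_top)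
      (f := f) ?_ (hint.mono_set (fun x hx => hmem n x hx))
    · rw [measureReal_def, hvol n, smul_eq_mul] at h; linarith [h]
    · intro x hx
      exact hf (hmem n x hx) (hmemR n) hx.2
  have hsum1 : Summable (fun n : ℕ => r * f (s + r * ((n:ℝ) + 1))) := by
    refine Summable.of_nonneg_of_le (fun n => by
      have := hpos _ (hmemR n); positivity) hterm_ge hHS.summable
  have hsum0 : Summable (fun n : ℕ => f (s + r * ((n:ℝ) + 1))) := by
    have := hsum1.mul_left r⁻¹
    refine this.congr fun n => ?_
    field_simp
  refine ⟨hsum0, ?_, ?_⟩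
  · refine le_trans (Summable.tsum_le_tsum hterm_ge hsum1 hHS.summable) ?_
    rw [hHS.tsum_eq]
  · -- lower bound: integral over Ioi (s+r)
    have hunion2 : (⋃ n : ℕ, Ioc ((s+r) + r * (n:ℝ)) ((s+r) + r * ((n:ℝ)+1))) = Ioi (s+r) :=
      union_Ioc_eq_Ioi hr
    have hmem2 : ∀ (n : ℕ) (x : ℝ), x ∈ Ioc ((s+r) + r * (n:ℝ)) ((s+r) + r * ((n:ℝ)+1)) → x ∈ Ioi s := by
      intro n x hx
      have : (0:ℝ) ≤ r * n := by positivity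
      have := hx.1; simp only [mem_Ioi]; linarith
    have hint2 : IntegrableOn f (Ioi (s+r)) := hint.mono_set (Ioi_subset_Ioi (by linarith))
    have hHS2 : HasSum (fun n : ℕ => ∫ x in Ioc ((s+r) + r * (n:ℝ)) ((s+r) + r * ((n:ℝ)+1)), f x)
        (∫ x in Ioi (s+r), f x) := by
      have hd2 : Pairwise (Function.onFun Disjoint fun n : ℕ => Ioc ((s+r) + r * (n:ℝ)) ((s+r) + r * ((n:ℝ)+1))) := by
        refine (pairwise_disjoint_on _).2 fun m n hmn => Set.Ioc_disjoint_Ioc.2 ?_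
        refine le_trans (min_le_left _ _) (le_trans ?_ (le_max_right _ _))
        have : (m:ℝ) + 1 ≤ (n:ℝ) := by exact_mod_cast hmn
        nlinarith
      have := hasSum_integral_iUnion (fun n => measurableSet_Ioc) hd2 (by rw [hunion2]; exact hint2)
      rwa [hunion2] at this
    have hterm_le : ∀ n : ℕ, (∫ x in Ioc ((s+r) + r * (n:ℝ)) ((s+r) + r * ((n:ℝ)+1)), f x)
        ≤ r * f (s + r * ((n:ℝ) + 1)) := by
      intro n
      have hle : ∀ x ∈ Ioc ((s+r) + r * (n:ℝ)) ((s+r) + r * ((n:ℝ)+1)), f x ≤ f (s + r * ((n:ℝ)+1)) := by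
        intro x hx
        refine hf (hmemR n) (hmem2 n x hx) ?_
        have := hx.1; linarith
      have h := setIntegral_mono_on (hint2.mono_set (fun x hx => by
          rw [← hunion2]; exact mem_iUnion.2 ⟨n, hx⟩))
        (integrableOn_const (by rw [Real.volume_Ioc]; exact ENNReal.ofReal_ne_top))
        measurableSet_Ioc hle
      rw [setIntegral_const, measureReal_def] at h
      have hv : (volume (Ioc ((s+r) + r * (n:ℝ)) ((s+r) + r * ((n:ℝ)+1)))).toReal = r := by
        rw [Real.volume_Ioc, ENNReal.toReal_ofReal (by nlinarith [hr.le] : (0:ℝ) ≤ (s+r) + r*((n:ℝ)+1) - ((s+r) + r*n))]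
        ring_nf
      rw [hv, smul_eq_mul] at h
      linarith
    refine le_trans ?_ (Summable.tsum_le_tsum hterm_le hHS2.summable hsum1)
    rw [hHS2.tsum_eq]

-- Application B: tails of the p-series
lemma tail_rpow_bounds {a : ℝ} (ha0 : 0 < a) {n : ℕ} (hn : 1 ≤ n) :
    Summable (fun k : ℕ => ((n : ℝ) + 1 + k) ^ (-(1 + a))) ∧
    ((n : ℝ) + 1) ^ (-a) / a ≤ (∑' k : ℕ, ((n : ℝ) + 1 + k) ^ (-(1 + a))) ∧
    (∑' k : ℕ, ((n : ℝ) + 1 + k) ^ (-(1 + a))) ≤ (n : ℝ) ^ (-a) / a := by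
  have hn0 : (0:ℝ) < n := by exact_mod_cast hn
  have hlt : -(1 + a) < -1 := by linarith
  have hf : AntitoneOn (fun x : ℝ => x ^ (-(1 + a))) (Ioi (n:ℝ)) := by
    intro x hx y hy hxy
    exact rpow_le_rpow_of_nonpos (lt_trans hn0 hx) hxy (by linarith)
  have hpos : ∀ x ∈ Ioi (n:ℝ), 0 ≤ x ^ (-(1 + a)) := fun x hx =>
    rpow_nonneg (le_of_lt (lt_trans hn0 hx)) _
  have hint : IntegrableOn (fun x : ℝ => x ^ (-(1 + a))) (Ioi (n:ℝ)) :=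
    integrableOn_Ioi_rpow_of_lt hlt hn0
  obtain ⟨hs, hub, hlb⟩ := riemann_bounds (r := 1) one_pos hf hpos hint
  have hterm : ∀ k : ℕ, ((n:ℝ) + 1 * ((k:ℝ) + 1)) ^ (-(1 + a)) = ((n : ℝ) + 1 + k) ^ (-(1 + a)) := by
    intro k; congr 1; ring
  have hI1 : (∫ x in Ioi (n:ℝ), x ^ (-(1 + a))) = (n:ℝ) ^ (-a) / a := by
    rw [integral_Ioi_rpow_of_lt hlt hn0]
    rw [show -(1+a) + 1 = -a by ring]
    field_simp
  have hI2 : (∫ x in Ioi ((n:ℝ) + 1), x ^ (-(1 + a))) = ((n:ℝ) + 1) ^ (-a) / a := by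
    rw [integral_Ioi_rpow_of_lt hlt (by linarith)]
    rw [show -(1+a) + 1 = -a by ring]
    field_simp
  have hts : (∑' (k : ℕ), 1 * ((n:ℝ) + 1 * ((k:ℝ) + 1)) ^ (-(1 + a)))
      = ∑' k : ℕ, ((n : ℝ) + 1 + k) ^ (-(1 + a)) :=
    tsum_congr fun k => by rw [one_mul, hterm]
  refine ⟨hs.congr hterm, ?_, ?_⟩
  · rw [← hI2]; rw [hts] at hlb; exact hlb
  · rw [← hI1]; rw [hts] at hub; exact hub

-- Application A: the exponential Riemann sum
lemma S_bounds {a : ℝ} (ha0 : 0 < a) (ha1 : a < 1) {G : ℝ}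
    (hG : G = ∫ t in Set.Ioi (0 : ℝ), t ^ (-a) * exp (-t)) {r : ℝ} (hr : 0 < r) :
    Summable (fun n : ℕ => ((n : ℝ) + 1) ^ (-a) * exp (-r) ^ (n + 1)) ∧
    G - r ^ (1 - a) / (1 - a) ≤ r ^ (1 - a) * (∑' n : ℕ, ((n : ℝ) + 1) ^ (-a) * exp (-r) ^ (n + 1)) ∧
    r ^ (1 - a) * (∑' n : ℕ, ((n : ℝ) + 1) ^ (-a) * exp (-r) ^ (n + 1)) ≤ G := by
  set f : ℝ → ℝ := fun t => t ^ (-a) * exp (-t) with hfdef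
  have hfa : AntitoneOn f (Ioi (0:ℝ)) := by
    intro x hx y hy hxy
    exact mul_le_mul (rpow_le_rpow_of_nonpos hx hxy (by linarith))
      (exp_le_exp.2 (by linarith)) (exp_pos _).le (rpow_nonneg hx.le _)
  have hfpos : ∀ x ∈ Ioi (0:ℝ), 0 ≤ f x := fun x hx => mul_nonneg (rpow_nonneg (le_of_lt hx) _) (exp_pos _).le
  have hfi : IntegrableOn f (Ioi (0:ℝ)) := by
    have h := Real.GammaIntegral_convergent (show (0:ℝ) < 1 - a by linarith)
    have he : (fun x : ℝ => rexp (-x) * x ^ (1 - a - 1)) = f := by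
      funext x; rw [hfdef, show (1:ℝ) - a - 1 = -a by ring, mul_comm]
    rwa [he] at h
  have hfG : (∫ x in Ioi (0:ℝ), f x) = G := hG.symm
  obtain ⟨hs, hub, hlb⟩ := riemann_bounds hr hfa hfpos hfi
  have hxp : ∀ n : ℕ, rexp (-(r * ((n:ℝ) + 1))) = rexp (-r) ^ (n + 1) := by
    intro n
    rw [← Real.exp_nat_mul]
    congr 1
    push_cast; ring
  have hterm : ∀ n : ℕ, r * f (0 + r * ((n:ℝ) + 1)) =
      r ^ (1 - a) * (((n : ℝ) + 1) ^ (-a) * exp (-r) ^ (n + 1)) := by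
    intro n
    have hn1 : (0:ℝ) ≤ (n:ℝ) + 1 := by positivity
    rw [hfdef, zero_add]
    simp only []
    rw [Real.mul_rpow hr.le hn1, hxp n,
      show (1:ℝ) - a = 1 + -a by ring, Real.rpow_add hr, Real.rpow_one]
    ring
  have hS : Summable (fun n : ℕ => ((n : ℝ) + 1) ^ (-a) * exp (-r) ^ (n + 1)) := by
    have h1 : Summable (fun n : ℕ => r ^ (1 - a) * (((n : ℝ) + 1) ^ (-a) * exp (-r) ^ (n + 1))) := by
      refine ((hs.mul_left r).congr fun n => ?_)
      exact hterm n
    exact (summable_mul_left_iff (ne_of_gt (rpow_pos_of_pos hr _))).1 h1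
  have hts : (∑' n : ℕ, r * f (0 + r * ((n:ℝ) + 1))) =
      r ^ (1 - a) * ∑' n : ℕ, ((n : ℝ) + 1) ^ (-a) * exp (-r) ^ (n + 1) := by
    rw [tsum_congr hterm, tsum_mul_left]
  refine ⟨hS, ?_, ?_⟩
  · -- lower bound
    rw [hts] at hlb
    refine le_trans ?_ hlb
    have hsplit : G = (∫ x in Ioc (0:ℝ) r, f x) + ∫ x in Ioi r, f x := by
      rw [← hfG, ← setIntegral_union (Set.Ioc_disjoint_Ioi le_rfl) measurableSet_Ioi
        (hfi.mono_set Set.Ioc_subset_Ioi_self) (hfi.mono_set (Ioi_subset_Ioi hr.le)),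
        Set.Ioc_union_Ioi_eq_Ioi hr.le]
    have hIocle : (∫ x in Ioc (0:ℝ) r, f x) ≤ r ^ (1 - a) / (1 - a) := by
      have hrpint : IntegrableOn (fun x : ℝ => x ^ (-a)) (Ioc (0:ℝ) r) :=
        (intervalIntegrable_iff_integrableOn_Ioc_of_le hr.le).1
          (intervalIntegral.intervalIntegrable_rpow' (by linarith))
      have h1 : (∫ x in Ioc (0:ℝ) r, f x) ≤ ∫ x in Ioc (0:ℝ) r, x ^ (-a) := by
        refine setIntegral_mono_on (hfi.mono_set Set.Ioc_subset_Ioi_self) hrpint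
          measurableSet_Ioc fun x hx => ?_
        rw [hfdef]
        simp only []
        refine mul_le_of_le_one_right (rpow_nonneg hx.1.le _) ?_
        rw [Real.exp_le_one_iff]; linarith [hx.1]
      have h2 : (∫ x in Ioc (0:ℝ) r, x ^ (-a)) = r ^ (1 - a) / (1 - a) := by
        rw [← intervalIntegral.integral_of_le hr.le,
          integral_rpow (Or.inl (by linarith : (-1:ℝ) < -a)),
          Real.zero_rpow (by linarith : -a + 1 ≠ 0),
          show -a + 1 = 1 - a by ring]
        ring
      linarith
    have h3 : (∫ x in Ioi (0 + r:ℝ), f x) = ∫ x in Ioi r, f x := by rw [zero_add]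
    rw [h3] at hlb ⊢
    linarith [hsplit, hIocle]
  · rw [hts] at hub
    rw [hfG] at hub
    exact hub

lemma Rbar_bounds (R : ℕ → ℝ) (c a : ℝ) (hc : 0 < c) (ha0 : 0 < a)
    (hnn : ∀ n, 0 ≤ R n) (hsum : Summable R)
    (hasym : Tendsto (fun n : ℕ => R n / (c * (n : ℝ) ^ (-(1 + a)))) atTop (𝓝 1))
    (Rbar : ℕ → ℝ) (hRbar : ∀ n, Rbar n = ∑' k : ℕ, R (n + 1 + k))
    {ε : ℝ} (hε : 0 < ε) :
    ∃ N : ℕ, 1 ≤ N ∧ ∀ n, N ≤ n →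
      (1 - ε) * (c / a) * (n : ℝ) ^ (-a) ≤ Rbar n ∧
      Rbar n ≤ (1 + ε) * (c / a) * (n : ℝ) ^ (-a) := by
  have hRbarnn : ∀ n, 0 ≤ Rbar n := fun n => by
    rw [hRbar]; exact tsum_nonneg fun k => hnn _
  set ε' : ℝ := min (ε/2) (1/2) with hε'def
  have hε'pos : 0 < ε' := lt_min (by linarith) (by norm_num)
  have hε'le : ε' ≤ ε/2 := min_le_left _ _
  have hε'half : ε' ≤ 1/2 := min_le_right _ _
  obtain ⟨M, hM⟩ := Metric.tendsto_atTop.1 hasym ε' hε'pos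
  have hRb : ∀ k : ℕ, max M 1 ≤ k →
      (1 - ε') * (c * (k:ℝ) ^ (-(1 + a))) ≤ R k ∧
      R k ≤ (1 + ε') * (c * (k:ℝ) ^ (-(1 + a))) := by
    intro k hk
    have hk1 : (1:ℕ) ≤ k := le_trans (le_max_right _ _) hk
    have hq : (0:ℝ) < c * (k:ℝ) ^ (-(1 + a)) := by
      have : (0:ℝ) < (k:ℝ) := by exact_mod_cast hk1
      positivity
    have h := hM k (le_trans (le_max_left _ _) hk)
    rw [Real.dist_eq, abs_sub_lt_iff] at h
    constructor
    · have h2 : 1 - ε' < R k / (c * (k:ℝ) ^ (-(1+a))) := by linarith [h.2]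
      calc (1 - ε') * (c * (k:ℝ) ^ (-(1 + a)))
          ≤ (R k / (c * (k:ℝ) ^ (-(1+a)))) * (c * (k:ℝ) ^ (-(1 + a))) :=
            mul_le_mul_of_nonneg_right h2.le hq.le
        _ = R k := by field_simp
    · have h2 : R k / (c * (k:ℝ) ^ (-(1+a))) < 1 + ε' := by linarith [h.1]
      calc R k = (R k / (c * (k:ℝ) ^ (-(1+a)))) * (c * (k:ℝ) ^ (-(1 + a))) := by field_simp
        _ ≤ (1 + ε') * (c * (k:ℝ) ^ (-(1 + a))) := mul_le_mul_of_nonneg_right h2.le hq.le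
  have hmain : ∀ n : ℕ, max M 1 ≤ n →
      (1 - ε') * (c / a) * ((n:ℝ) + 1) ^ (-a) ≤ Rbar n ∧
      Rbar n ≤ (1 + ε') * (c / a) * (n:ℝ) ^ (-a) := by
    intro n hn
    have hn1 : (1:ℕ) ≤ n := le_trans (le_max_right _ _) hn
    obtain ⟨hTs, hTlb, hTub⟩ := tail_rpow_bounds ha0 hn1
    have hRs : Summable (fun k : ℕ => R (n + 1 + k)) := by
      have h := (summable_nat_add_iff (n+1)).2 hsum
      exact h.congr fun k => congrArg R (by omega)
    have hidx : ∀ k : ℕ, max M 1 ≤ n + 1 + k := fun k => le_trans hn (by omega)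
    have hcast : ∀ k : ℕ, ((n + 1 + k : ℕ) : ℝ) = (n:ℝ) + 1 + k := by
      intro k; push_cast; ring
    constructor
    · have hle : ∀ k : ℕ, (1 - ε') * c * ((n:ℝ) + 1 + k) ^ (-(1 + a)) ≤ R (n + 1 + k) := by
        intro k
        have h := (hRb _ (hidx k)).1
        rw [hcast k] at h
        linarith [h]
      have h := Summable.tsum_le_tsum hle (hTs.mul_left _) hRs
      rw [tsum_mul_left, ← hRbar n] at h
      calc (1 - ε') * (c / a) * ((n:ℝ) + 1) ^ (-a)
          = (1 - ε') * c * (((n:ℝ) + 1) ^ (-a) / a) := by ring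
        _ ≤ (1 - ε') * c * ∑' k : ℕ, ((n:ℝ) + 1 + k) ^ (-(1 + a)) :=
            mul_le_mul_of_nonneg_left hTlb (by nlinarith)
        _ ≤ Rbar n := h
    · have hge : ∀ k : ℕ, R (n + 1 + k) ≤ (1 + ε') * c * ((n:ℝ) + 1 + k) ^ (-(1 + a)) := by
        intro k
        have h := (hRb _ (hidx k)).2
        rw [hcast k] at h
        linarith [h]
      have h := Summable.tsum_le_tsum hge hRs (hTs.mul_left _)
      rw [tsum_mul_left, ← hRbar n] at h
      calc Rbar n ≤ (1 + ε') * c * ∑' k : ℕ, ((n:ℝ) + 1 + k) ^ (-(1 + a)) := h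
        _ ≤ (1 + ε') * c * ((n:ℝ) ^ (-a) / a) :=
            mul_le_mul_of_nonneg_left hTub (by nlinarith)
        _ = (1 + ε') * (c / a) * (n:ℝ) ^ (-a) := by ring
  -- conclude
  have hca : (0:ℝ) < c / a := div_pos hc ha0
  have hupper : ∀ n : ℕ, max M 1 ≤ n → Rbar n ≤ (1 + ε) * (c / a) * (n:ℝ) ^ (-a) := by
    intro n hn
    have h := (hmain n hn).2
    have hn0 : (0:ℝ) < (n:ℝ) := by exact_mod_cast le_trans (le_max_right _ _) hn
    have hnn' : (0:ℝ) ≤ (c/a) * (n:ℝ) ^ (-a) := by positivity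
    nlinarith [rpow_nonneg hn0.le (-a)]
  by_cases hε1 : 1 ≤ ε
  · refine ⟨max M 1, le_max_right _ _, fun n hn => ⟨?_, hupper n hn⟩⟩
    have hn0 : (0:ℝ) ≤ (n:ℝ) := Nat.cast_nonneg n
    have : (1 - ε) * (c/a) ≤ 0 := mul_nonpos_of_nonpos_of_nonneg (by linarith) hca.le
    calc (1 - ε) * (c/a) * (n:ℝ) ^ (-a) ≤ 0 :=
          mul_nonpos_of_nonpos_of_nonneg this (rpow_nonneg hn0 _)
      _ ≤ Rbar n := hRbarnn n
  · push_neg at hε1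
    set θ : ℝ := (1 - ε) / (1 - ε') with hθdef
    have h1ε' : (0:ℝ) < 1 - ε' := by linarith
    have hθlt : θ < 1 := (div_lt_one h1ε').2 (by linarith [hε'le])
    have h0 : Tendsto (fun n : ℕ => 1 + 1/(n:ℝ)) atTop (𝓝 1) := by
      have := tendsto_one_div_atTop_nhds_zero_nat (𝕜 := ℝ)
      simpa using tendsto_const_nhds.add this
    have hrt : Tendsto (fun n : ℕ => (1 + 1/(n:ℝ)) ^ (-a)) atTop (𝓝 1) := by
      have h := h0.rpow_const (p := -a) (Or.inl one_ne_zero)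
      rwa [Real.one_rpow] at h
    obtain ⟨N₁, hN₁⟩ := (hrt.eventually (eventually_gt_nhds hθlt)).exists_forall_of_atTop
    refine ⟨max (max M 1) (max N₁ 1), by omega, fun n hn => ?_⟩
    have hnM : max M 1 ≤ n := le_trans (le_max_left _ _) hn
    have hn1 : (1:ℕ) ≤ n := le_trans (le_max_right _ _) hnM
    have hnN₁ : N₁ ≤ n := le_trans (le_trans (le_max_left _ _) (le_max_right (max M 1) _)) hn
    refine ⟨?_, hupper n hnM⟩
    have hn0 : (0:ℝ) < (n:ℝ) := by exact_mod_cast hn1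
    have hratio : θ < (1 + 1/(n:ℝ)) ^ (-a) := hN₁ n hnN₁
    have hsplit : ((n:ℝ) + 1) ^ (-a) = (n:ℝ) ^ (-a) * (1 + 1/(n:ℝ)) ^ (-a) := by
      rw [show (n:ℝ) + 1 = (n:ℝ) * (1 + 1/(n:ℝ)) by field_simp, Real.mul_rpow hn0.le (by positivity)]
    have hθeq : (1 - ε) = θ * (1 - ε') := by
      rw [hθdef, div_mul_cancel₀ _ (ne_of_gt h1ε')]
    have hkey : (1 - ε) * (n:ℝ) ^ (-a) ≤ (1 - ε') * ((n:ℝ) + 1) ^ (-a) := by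
      rw [hsplit, hθeq]
      have h5 : (0:ℝ) ≤ (n:ℝ) ^ (-a) * (1 - ε') := by positivity
      nlinarith [mul_le_mul_of_nonneg_left hratio.le h5]
    have h := (hmain n hnM).1
    nlinarith [mul_le_mul_of_nonneg_left hkey hca.le]

set_option maxHeartbeats 1000000 in
/-- Tauberian asymptotics: if `R(n) = c n^{-(1+a)} (1+o(1))` with `c > 0`,
`a ∈ (0,1)`, and `ψ(x) = ∑_{n ≥ 0} R̄(n) x^n` with `R̄(n) = ∑_{k > n} R(k)`,
then `ψ(e^{-r}) = (c Γ(1-a)/a) r^{a-1} (1+o(1))` as `r ↓ 0`, where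
`Γ(1-a) = ∫₀^∞ t^{-a} e^{-t} dt`. -/
theorem heavy_tail_generating_function_asymptotics
    (R : ℕ → ℝ) (c a : ℝ) (hc : 0 < c) (ha0 : 0 < a) (ha1 : a < 1)
    (hnn : ∀ n, 0 ≤ R n) (hsum : Summable R)
    (hasym : Tendsto (fun n : ℕ => R n / (c * (n : ℝ) ^ (-(1 + a)))) atTop (𝓝 1))
    (Rbar : ℕ → ℝ) (hRbar : ∀ n, Rbar n = ∑' k : ℕ, R (n + 1 + k))
    (ψ : ℝ → ℝ) (hψ : ∀ x, ψ x = ∑' n : ℕ, Rbar n * x ^ n)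
    (G : ℝ) (hG : G = ∫ t in Set.Ioi (0 : ℝ), t ^ (-a) * exp (-t)) :
    Tendsto (fun r : ℝ => ψ (exp (-r)) / (c * G / a * r ^ (a - 1)))
      (𝓝[>] 0) (𝓝 1) := by
  have hGpos : 0 < G := by
    have he : (fun t : ℝ => t ^ (-a) * exp (-t)) = fun x : ℝ => rexp (-x) * x ^ (1 - a - 1) := by
      funext t; rw [show (1:ℝ) - a - 1 = -a by ring, mul_comm]
    have : G = Real.Gamma (1 - a) := by
      rw [hG, Real.Gamma_eq_integral (by linarith : (0:ℝ) < 1 - a), he]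
    rw [this]
    exact Real.Gamma_pos_of_pos (by linarith)
  set K' : ℝ := c / a with hK'def
  have hK' : 0 < K' := div_pos hc ha0
  have hRbarnn : ∀ n, 0 ≤ Rbar n := fun n => by
    rw [hRbar]; exact tsum_nonneg fun k => hnn _
  -- limit of the pure power sum
  have hpow0 : Tendsto (fun r : ℝ => r ^ (1 - a)) (𝓝[>] 0) (𝓝 0) := by
    have hcont := (Real.continuousAt_rpow_const 0 (1 - a) (Or.inr (by linarith))).tendsto
    rw [Real.zero_rpow (by linarith : (1:ℝ) - a ≠ 0)] at hcont
    exact hcont.mono_left nhdsWithin_le_nhds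
  have hL : Tendsto (fun r : ℝ => r ^ (1 - a) *
      ∑' n : ℕ, ((n : ℝ) + 1) ^ (-a) * exp (-r) ^ (n + 1)) (𝓝[>] 0) (𝓝 G) := by
    refine tendsto_of_tendsto_of_tendsto_of_le_of_le'
      (g := fun r : ℝ => G - r ^ (1 - a) / (1 - a)) (h := fun _ => G) ?_ tendsto_const_nhds ?_ ?_
    · have := tendsto_const_nhds (α := ℝ) (x := G) (f := 𝓝[>] (0:ℝ)) |>.sub
        (hpow0.div_const (1 - a))
      simpa using this
    · exact eventually_mem_nhdsWithin.mono fun r hr => (S_bounds ha0 ha1 hG hr).2.1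
    · exact eventually_mem_nhdsWithin.mono fun r hr => (S_bounds ha0 ha1 hG hr).2.2
  -- main limit for Ψ
  have hΨ : Tendsto (fun r : ℝ => r ^ (1 - a) * ψ (exp (-r))) (𝓝[>] 0) (𝓝 (K' * G)) := by
    rw [Metric.tendsto_nhds]
    intro ε hε
    set ε' : ℝ := min (ε / (4 * (K' * G + 1))) (1/2) with hε'def
    have hKG : 0 < K' * G := mul_pos hK' hGpos
    have hε'pos : 0 < ε' := lt_min (by positivity) (by norm_num)
    have hε'half : ε' ≤ 1/2 := min_le_right _ _
    have hsmall1 : ε' * (K' * G) ≤ ε / 4 := by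
      calc ε' * (K' * G) ≤ ε / (4 * (K' * G + 1)) * (K' * G) :=
            mul_le_mul_of_nonneg_right (min_le_left _ _) hKG.le
        _ ≤ ε / 4 := by
            rw [div_mul_eq_mul_div, div_le_div_iff₀ (by positivity) (by norm_num)]
            nlinarith
    set ε₂ : ℝ := ε / (8 * (K' + 1)) with hε₂def
    have hε₂pos : 0 < ε₂ := by positivity
    have hsmall2 : (2 * K' + 2) * ε₂ = ε / 4 := by
      rw [hε₂def]; field_simp; ring
    obtain ⟨N, hN1, hN⟩ := Rbar_bounds R c a hc ha0 hnn hsum hasym Rbar hRbar hε'pos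
    set C : ℝ := ∑ i ∈ Finset.range N, Rbar i with hCdef
    set D : ℝ := ∑ i ∈ Finset.range (N - 1), ((i : ℝ) + 1) ^ (-a) with hDdef
    have hC0 : 0 ≤ C := Finset.sum_nonneg fun i _ => hRbarnn i
    have hD0 : 0 ≤ D := Finset.sum_nonneg fun i _ => rpow_nonneg (by positivity) _
    -- the key deterministic bounds
    have key : ∀ r : ℝ, 0 < r →
        (1 - ε') * K' * (r ^ (1-a) * (∑' n : ℕ, ((n : ℝ) + 1) ^ (-a) * exp (-r) ^ (n + 1))
            - r ^ (1-a) * D) ≤ r ^ (1-a) * ψ (exp (-r)) ∧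
        r ^ (1-a) * ψ (exp (-r)) ≤
          (1 + ε') * K' * (r ^ (1-a) * (∑' n : ℕ, ((n : ℝ) + 1) ^ (-a) * exp (-r) ^ (n + 1)))
            + r ^ (1-a) * C := by
      intro r hr
      set x : ℝ := exp (-r) with hxdef
      have hx0 : 0 < x := exp_pos _
      have hx1 : x < 1 := by rw [hxdef, exp_lt_one_iff]; linarith
      have hgeo : Summable (fun n : ℕ => x ^ n) := summable_geometric_of_lt_one hx0.le hx1
      have hRshift : ∀ n : ℕ, Summable (fun k : ℕ => R (n + 1 + k)) := by
        intro n
        exact ((summable_nat_add_iff (n+1)).2 hsum).congr fun k => congrArg R (by omega)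
      have hRbarle : ∀ n, Rbar n ≤ ∑' k, R k := by
        intro n
        rw [hRbar]
        exact Summable.tsum_le_tsum_of_inj (fun k => n + 1 + k) (fun k1 k2 h => by simp only [add_right_inj] at h; exact h)
          (fun m _ => hnn m) (fun k => le_rfl) (hRshift n) hsum
      have hψsum : Summable (fun n : ℕ => Rbar n * x ^ n) := by
        refine Summable.of_nonneg_of_le (fun n => mul_nonneg (hRbarnn n) (pow_nonneg hx0.le n))
          (fun n => mul_le_mul_of_nonneg_right (hRbarle n) (pow_nonneg hx0.le n))
          (hgeo.mul_left _)
      obtain ⟨hSsum, -, -⟩ := S_bounds ha0 ha1 hG hr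
      rw [← hxdef] at hSsum
      -- the shifted power-sum u
      have hgeoN : Summable (fun n : ℕ => x ^ (n + N)) := (summable_nat_add_iff N).2 hgeo
      have hule : ∀ n : ℕ, ((n + N : ℕ) : ℝ) ^ (-a) * x ^ (n + N) ≤ x ^ (n + N) := by
        intro n
        refine mul_le_of_le_one_left (pow_nonneg hx0.le _) ?_
        exact rpow_le_one_of_one_le_of_nonpos (by exact_mod_cast Nat.one_le_iff_ne_zero.2 (by omega)) (by linarith)
      have hu : Summable (fun n : ℕ => ((n + N : ℕ) : ℝ) ^ (-a) * x ^ (n + N)) :=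
        Summable.of_nonneg_of_le (fun n => mul_nonneg (rpow_nonneg (by positivity) _)
          (pow_nonneg hx0.le _)) hule hgeoN
      -- U = S - Dx
      have hUeq : (∑' n : ℕ, ((n : ℝ) + 1) ^ (-a) * x ^ (n + 1)) =
          (∑ i ∈ Finset.range (N - 1), ((i : ℝ) + 1) ^ (-a) * x ^ (i + 1)) +
          ∑' n : ℕ, ((n + N : ℕ) : ℝ) ^ (-a) * x ^ (n + N) := by
        rw [← Summable.sum_add_tsum_nat_add (N - 1) hSsum]
        congr 1
        refine tsum_congr fun n => ?_
        have h1 : n + (N - 1) + 1 = n + N := by omega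
        rw [show ((n + (N-1) : ℕ) : ℝ) + 1 = ((n + (N-1) + 1 : ℕ) : ℝ) by push_cast; ring, h1]
      set Dx : ℝ := ∑ i ∈ Finset.range (N - 1), ((i : ℝ) + 1) ^ (-a) * x ^ (i + 1) with hDxdef
      have hDx0 : 0 ≤ Dx := Finset.sum_nonneg fun i _ =>
        mul_nonneg (rpow_nonneg (by positivity) _) (pow_nonneg hx0.le _)
      have hDxle : Dx ≤ D := by
        refine Finset.sum_le_sum fun i _ => ?_
        exact mul_le_of_le_one_right (rpow_nonneg (by positivity) _) (pow_le_one₀ hx0.le hx1.le)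
      -- split ψ
      have hsplitψ : ψ x = (∑ i ∈ Finset.range N, Rbar i * x ^ i) +
          ∑' n : ℕ, Rbar (n + N) * x ^ (n + N) := by
        rw [hψ x, ← Summable.sum_add_tsum_nat_add N hψsum]
      have hheadle : (∑ i ∈ Finset.range N, Rbar i * x ^ i) ≤ C := by
        refine Finset.sum_le_sum fun i _ => ?_
        exact mul_le_of_le_one_right (hRbarnn i) (pow_le_one₀ hx0.le hx1.le)
      have hhead0 : 0 ≤ ∑ i ∈ Finset.range N, Rbar i * x ^ i :=
        Finset.sum_nonneg fun i _ => mul_nonneg (hRbarnn i) (pow_nonneg hx0.le _)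
      have htails : Summable (fun n : ℕ => Rbar (n + N) * x ^ (n + N)) :=
        (summable_nat_add_iff N).2 hψsum
      -- tail bounds
      have htail_lb : (1 - ε') * K' * (∑' n : ℕ, ((n + N : ℕ) : ℝ) ^ (-a) * x ^ (n + N)) ≤
          ∑' n : ℕ, Rbar (n + N) * x ^ (n + N) := by
        rw [← tsum_mul_left]
        refine Summable.tsum_le_tsum (fun n => ?_) (hu.mul_left _) htails
        have h := (hN (n + N) (by omega)).1
        rw [← hK'def] at h
        have h2 := mul_le_mul_of_nonneg_right h (pow_nonneg hx0.le (n + N))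
        calc (1 - ε') * K' * (((n + N : ℕ) : ℝ) ^ (-a) * x ^ (n + N))
            = (1 - ε') * K' * ((n + N : ℕ) : ℝ) ^ (-a) * x ^ (n + N) := by ring
          _ ≤ Rbar (n + N) * x ^ (n + N) := h2
      have htail_ub : (∑' n : ℕ, Rbar (n + N) * x ^ (n + N)) ≤
          (1 + ε') * K' * ∑' n : ℕ, ((n + N : ℕ) : ℝ) ^ (-a) * x ^ (n + N) := by
        rw [← tsum_mul_left]
        refine Summable.tsum_le_tsum (fun n => ?_) htails (hu.mul_left _)
        have h := (hN (n + N) (by omega)).2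
        rw [← hK'def] at h
        have h2 := mul_le_mul_of_nonneg_right h (pow_nonneg hx0.le (n + N))
        calc Rbar (n + N) * x ^ (n + N)
            ≤ (1 + ε') * K' * ((n + N : ℕ) : ℝ) ^ (-a) * x ^ (n + N) := h2
          _ = (1 + ε') * K' * (((n + N : ℕ) : ℝ) ^ (-a) * x ^ (n + N)) := by ring
      -- assemble, with S and U
      set S : ℝ := ∑' n : ℕ, ((n : ℝ) + 1) ^ (-a) * x ^ (n + 1) with hSdef
      set U : ℝ := ∑' n : ℕ, ((n + N : ℕ) : ℝ) ^ (-a) * x ^ (n + N) with hUdef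
      have hUS : U = S - Dx := by linarith [hUeq]
      have hco1 : 0 ≤ (1 - ε') * K' := by
        refine mul_nonneg (by linarith) hK'.le
      have hco2 : 0 ≤ (1 + ε') * K' := by positivity
      have hψlb : (1 - ε') * K' * (S - D) ≤ ψ x := by
        have h1 : S - D ≤ U := by rw [hUS]; linarith
        have h2 := mul_le_mul_of_nonneg_left h1 hco1
        rw [hsplitψ]
        linarith [htail_lb]
      have hψub : ψ x ≤ (1 + ε') * K' * S + C := by
        have h1 : U ≤ S := by rw [hUS]; linarith
        have h2 := mul_le_mul_of_nonneg_left h1 hco2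
        rw [hsplitψ]
        linarith [htail_ub]
      -- multiply by r^(1-a)
      have hP : (0:ℝ) < r ^ (1-a) := rpow_pos_of_pos hr _
      constructor
      · have h := mul_le_mul_of_nonneg_left hψlb hP.le
        nlinarith [h]
      · have h := mul_le_mul_of_nonneg_left hψub hP.le
        nlinarith [h]
    -- eventual facts
    have e2 : ∀ᶠ r in 𝓝[>] (0:ℝ),
        |r ^ (1-a) * (∑' n : ℕ, ((n : ℝ) + 1) ^ (-a) * exp (-r) ^ (n + 1)) - G| < ε₂ := by
      have := Metric.tendsto_nhds.1 hL ε₂ hε₂pos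
      simpa [Real.dist_eq] using this
    have e3 : ∀ᶠ r in 𝓝[>] (0:ℝ), r ^ (1-a) * (C + D + 1) < ε₂ := by
      have h := hpow0.mul_const (C + D + 1)
      have := Metric.tendsto_nhds.1 h ε₂ hε₂pos
      refine this.mono fun r hr => ?_
      simp only [Real.dist_eq, zero_mul, sub_zero] at hr
      calc r ^ (1-a) * (C + D + 1) ≤ |r ^ (1-a) * (C + D + 1)| := le_abs_self _
        _ < ε₂ := hr
    filter_upwards [eventually_mem_nhdsWithin, e2, e3] with r hr h2 h3
    have hrpos : (0:ℝ) < r := hr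
    obtain ⟨klb, kub⟩ := key r hrpos
    have hP : (0:ℝ) ≤ r ^ (1-a) := (rpow_pos_of_pos hrpos _).le
    set L : ℝ := r ^ (1-a) * (∑' n : ℕ, ((n : ℝ) + 1) ^ (-a) * exp (-r) ^ (n + 1)) with hLdef
    set Ψ : ℝ := r ^ (1-a) * ψ (exp (-r)) with hΨdef
    have habs := abs_lt.1 h2
    have hPC : r ^ (1-a) * C < ε₂ := by nlinarith [mul_le_mul_of_nonneg_left (show C ≤ C + D + 1 by linarith) hP]
    have hPD : r ^ (1-a) * D < ε₂ := by nlinarith [mul_le_mul_of_nonneg_left (show D ≤ C + D + 1 by linarith) hP]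
    rw [Real.dist_eq, abs_lt]
    have hub2 := mul_le_mul_of_nonneg_left (show L ≤ G + ε₂ by linarith)
      (show (0:ℝ) ≤ (1 + ε') * K' by positivity)
    have hlb2 := mul_le_mul_of_nonneg_left (show G - 2*ε₂ ≤ L - r ^ (1-a) * D by linarith)
      (show (0:ℝ) ≤ (1 - ε') * K' by nlinarith)
    constructor
    · -- K'G - Ψ < ε
      nlinarith [hlb2, klb, hsmall1, hsmall2, hε₂pos, hK', hε'pos, hε'half,
        mul_nonneg hK'.le hε₂pos.le, mul_nonneg (mul_nonneg hε'pos.le hK'.le) hε₂pos.le]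
    · nlinarith [hub2, kub, hPC, hsmall1, hsmall2, hε₂pos, hK', hε'pos, hε'half,
        mul_nonneg hK'.le hε₂pos.le, mul_nonneg (mul_nonneg hε'pos.le hK'.le) hε₂pos.le]
  -- convert to the stated form
  have hKne : c * G / a ≠ 0 := by positivity
  have heq : ∀ᶠ r in 𝓝[>] (0:ℝ),
      (r ^ (1-a) * ψ (exp (-r))) / (c * G / a) = ψ (exp (-r)) / (c * G / a * r ^ (a - 1)) := by
    refine eventually_mem_nhdsWithin.mono fun r hr => ?_
    have hrpos : (0:ℝ) < r := hr
    have hPne : r ^ (1-a) ≠ 0 := (rpow_pos_of_pos hrpos _).ne'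
    rw [show a - 1 = -(1-a) by ring, Real.rpow_neg hrpos.le]
    field_simp
  have h2 := hΨ.div_const (c * G / a)
  have hKK : K' * G / (c * G / a) = 1 := by
    rw [hK'def]; field_simp
  rw [hKK] at h2
  exact h2.congr' heq
end
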